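/- arXiv:2203.05854 — 6 statements merged into one kernel-verified Lean document; each statement's English description precedes it below -/
import Mathlib

section
/- Let m > 0 and p₁, p₂ be on the positive-energy mass shell of mass m, i.e. pᵢ = (√(|𝐩ᵢ|² + m²), 𝐩ᵢ). Then for 𝐩₁ ≠ 𝐩₂, 0 ≤ |𝐩₁ - 𝐩₂|² / (-(p₁ - p₂)²) ≤ (|𝐩₁|² + |𝐩₂|² + 2m²)/(2m²). -/
/-- Mass-shell estimate: 0 ≤ |𝐩₁-𝐩₂|²/(-(p₁-p₂)²) ≤ (|𝐩₁|²+|𝐩₂|²+2m²)/(2m²) for 𝐩₁ ≠ 𝐩₂. -/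
theorem stmt_4 (m : ℝ) (hm : 0 < m) (p₁ p₂ : EuclideanSpace ℝ (Fin 3)) (hne : p₁ ≠ p₂) :
    0 ≤ ‖p₁ - p₂‖ ^ 2 /
        (-((Real.sqrt (‖p₁‖ ^ 2 + m ^ 2) - Real.sqrt (‖p₂‖ ^ 2 + m ^ 2)) ^ 2 - ‖p₁ - p₂‖ ^ 2))
    ∧ ‖p₁ - p₂‖ ^ 2 /
        (-((Real.sqrt (‖p₁‖ ^ 2 + m ^ 2) - Real.sqrt (‖p₂‖ ^ 2 + m ^ 2)) ^ 2 - ‖p₁ - p₂‖ ^ 2))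
      ≤ (‖p₁‖ ^ 2 + ‖p₂‖ ^ 2 + 2 * m ^ 2) / (2 * m ^ 2) := by
  set x : ℝ := ‖p₁‖ with hxdef
  set y : ℝ := ‖p₂‖ with hydef
  set s : ℝ := inner ℝ p₁ p₂ with hsdef
  have hx : 0 ≤ x := norm_nonneg _
  have hy : 0 ≤ y := norm_nonneg _
  have hs : |s| ≤ x * y := abs_real_inner_le_norm p₁ p₂
  have hs1 : s ≤ x * y := (abs_le.mp hs).2
  have hs2 : -(x * y) ≤ s := (abs_le.mp hs).1
  have hN : ‖p₁ - p₂‖ ^ 2 = x ^ 2 - 2 * s + y ^ 2 := by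
    rw [hxdef, hydef, hsdef, @norm_sub_sq_real]
  have hNpos : 0 < ‖p₁ - p₂‖ ^ 2 := by
    have h : p₁ - p₂ ≠ 0 := sub_ne_zero.mpr hne
    exact pow_pos (norm_pos_iff.mpr h) 2
  set a : ℝ := Real.sqrt (x ^ 2 + m ^ 2) with hadef
  set b : ℝ := Real.sqrt (y ^ 2 + m ^ 2) with hbdef
  have ha2 : a ^ 2 = x ^ 2 + m ^ 2 := Real.sq_sqrt (by positivity)
  have hb2 : b ^ 2 = y ^ 2 + m ^ 2 := Real.sq_sqrt (by positivity)
  have ha : 0 ≤ a := Real.sqrt_nonneg _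
  have hb : 0 ≤ b := Real.sqrt_nonneg _
  have hP2 : (a * b) ^ 2 = (x ^ 2 + m ^ 2) * (y ^ 2 + m ^ 2) := by
    rw [mul_pow, ha2, hb2]
  have hP : 0 ≤ a * b := mul_nonneg ha hb
  have hden : (0:ℝ) < x ^ 2 + y ^ 2 + 2 * m ^ 2 := by positivity
  -- key inequality
  have key : m ^ 2 * (x ^ 2 - 2 * s + y ^ 2) ≤
      (a * b - m ^ 2 - s) * (x ^ 2 + y ^ 2 + 2 * m ^ 2) := by
    set R : ℝ := 2 * m ^ 2 * (x ^ 2 + y ^ 2) + 2 * m ^ 4 + s * (x ^ 2 + y ^ 2) with hR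
    have hsq : R ^ 2 ≤ (a * b * (x ^ 2 + y ^ 2 + 2 * m ^ 2)) ^ 2 := by
      have h1 : 0 ≤ m ^ 2 * (x - y) ^ 4 * (x ^ 2 + y ^ 2 + m ^ 2) := by positivity
      have h2 : 0 ≤ (x ^ 2 + y ^ 2) ^ 2 * ((x * y - s) * (x * y + s)) := by
        have h2a : (0:ℝ) ≤ x * y - s := by linarith
        have h2b : (0:ℝ) ≤ x * y + s := by linarith
        positivity
      have h3 : 0 ≤ 4 * m ^ 2 * (x ^ 2 + y ^ 2) * (x ^ 2 + y ^ 2 + m ^ 2) * (x * y - s) := by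
        have h3a : (0:ℝ) ≤ x * y - s := by linarith
        positivity
      have hid : (a * b * (x ^ 2 + y ^ 2 + 2 * m ^ 2)) ^ 2 - R ^ 2 =
          m ^ 2 * (x - y) ^ 4 * (x ^ 2 + y ^ 2 + m ^ 2)
          + (x ^ 2 + y ^ 2) ^ 2 * ((x * y - s) * (x * y + s))
          + 4 * m ^ 2 * (x ^ 2 + y ^ 2) * (x ^ 2 + y ^ 2 + m ^ 2) * (x * y - s) := by
        have : (a * b * (x ^ 2 + y ^ 2 + 2 * m ^ 2)) ^ 2 =
            (x ^ 2 + m ^ 2) * (y ^ 2 + m ^ 2) * (x ^ 2 + y ^ 2 + 2 * m ^ 2) ^ 2 := by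
          rw [mul_pow, hP2]
        rw [this, hR]; ring
      linarith
    have hPden : 0 ≤ a * b * (x ^ 2 + y ^ 2 + 2 * m ^ 2) := mul_nonneg hP hden.le
    have hRle : R ≤ a * b * (x ^ 2 + y ^ 2 + 2 * m ^ 2) := by
      rcases le_or_gt R 0 with h | h
      · linarith
      · nlinarith [hsq, hPden, h]
    nlinarith [hRle]
  -- D = N - (a-b)^2 = 2(ab - m^2 - s)
  have hD : -((a - b) ^ 2 - ‖p₁ - p₂‖ ^ 2) = 2 * (a * b - m ^ 2 - s) := by
    have : (a - b) ^ 2 = a ^ 2 + b ^ 2 - 2 * (a * b) := by ring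
    rw [this, ha2, hb2, hN]; ring
  have hNx : 0 < x ^ 2 - 2 * s + y ^ 2 := hN ▸ hNpos
  have hDpos : 0 < -((a - b) ^ 2 - ‖p₁ - p₂‖ ^ 2) := by
    rw [hD]
    have h1 : 0 < (a * b - m ^ 2 - s) * (x ^ 2 + y ^ 2 + 2 * m ^ 2) :=
      lt_of_lt_of_le (mul_pos (pow_pos hm 2) hNx) key
    rcases mul_pos_iff.mp h1 with ⟨hA, _⟩ | ⟨_, hB⟩
    · linarith
    · linarith
  constructor
  · positivity
  · rw [div_le_div_iff₀ hDpos (by positivity), hD, hN]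
    linarith [key]
end

section
/- Let m > 0 and p₁, p₂ on the positive mass-m shell with 𝐩₁ ≠ 𝐩₂. Then the function (𝐩₁, 𝐩₂) ↦ |𝐩₁ - 𝐩₂|²/(-(p₁-p₂)²) is bounded on every compact subset of {(𝐩₁,𝐩₂) ∈ ℝ³×ℝ³ : 𝐩₁ ≠ 𝐩₂}, with a bound given by the polynomial (|𝐩₁|² + |𝐩₂|² + 2m²)/(2m²); in particular it is majorized everywhere on its domain by a single polynomial in (𝐩₁, 𝐩₂). -/
private lemma key_ratio (m r s d : ℝ) (hm : 0 < m) (hr : 0 ≤ r) (hs : 0 ≤ s)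
    (hd : 0 < d) (hrs : |r - s| ≤ d) :
    d ^ 2 / (-((Real.sqrt (r ^ 2 + m ^ 2) - Real.sqrt (s ^ 2 + m ^ 2)) ^ 2 - d ^ 2))
      ≤ (r ^ 2 + s ^ 2 + 2 * m ^ 2) / (2 * m ^ 2) := by
  set a := Real.sqrt (r ^ 2 + m ^ 2) with ha_def
  set b := Real.sqrt (s ^ 2 + m ^ 2) with hb_def
  have ha : 0 < a := Real.sqrt_pos.mpr (by positivity)
  have hb : 0 < b := Real.sqrt_pos.mpr (by positivity)
  have ha2 : a ^ 2 = r ^ 2 + m ^ 2 := Real.sq_sqrt (by positivity)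
  have hb2 : b ^ 2 = s ^ 2 + m ^ 2 := Real.sq_sqrt (by positivity)
  -- step 1: r*s*(a²+b²) ≤ a*b*(r²+s²)
  have habsq : (a * b) ^ 2 = (r ^ 2 + m ^ 2) * (s ^ 2 + m ^ 2) := by
    rw [mul_pow, ha2, hb2]
  have expand : (a * b * (r ^ 2 + s ^ 2)) ^ 2 - (r * s * (a ^ 2 + b ^ 2)) ^ 2
      = m ^ 2 * (r ^ 2 + s ^ 2 + m ^ 2) * (r ^ 2 - s ^ 2) ^ 2 := by
    linear_combination (r ^ 2 + s ^ 2) ^ 2 * habsq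
      - r ^ 2 * s ^ 2 * (a ^ 2 + b ^ 2 + r ^ 2 + s ^ 2 + 2 * m ^ 2) * ha2
      - r ^ 2 * s ^ 2 * (a ^ 2 + b ^ 2 + r ^ 2 + s ^ 2 + 2 * m ^ 2) * hb2
  have hsq : (r * s * (a ^ 2 + b ^ 2)) ^ 2 ≤ (a * b * (r ^ 2 + s ^ 2)) ^ 2 := by
    nlinarith [expand, mul_nonneg (mul_nonneg (sq_nonneg m)
      (by positivity : (0:ℝ) ≤ r ^ 2 + s ^ 2 + m ^ 2)) (sq_nonneg (r ^ 2 - s ^ 2))]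
  have h1 : 0 ≤ r * s * (a ^ 2 + b ^ 2) := by positivity
  have h2 : 0 ≤ a * b * (r ^ 2 + s ^ 2) := by positivity
  have step1 : r * s * (a ^ 2 + b ^ 2) ≤ a * b * (r ^ 2 + s ^ 2) := by
    calc r * s * (a ^ 2 + b ^ 2) = Real.sqrt ((r * s * (a ^ 2 + b ^ 2)) ^ 2) :=
          (Real.sqrt_sq h1).symm
      _ ≤ Real.sqrt ((a * b * (r ^ 2 + s ^ 2)) ^ 2) := Real.sqrt_le_sqrt hsq
      _ = a * b * (r ^ 2 + s ^ 2) := Real.sqrt_sq h2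
  -- (a-b)(a+b) = r² - s²
  have hdiff : (a - b) * (a + b) = r ^ 2 - s ^ 2 := by
    have : (a - b) * (a + b) = a ^ 2 - b ^ 2 := by ring
    rw [this, ha2, hb2]; ring
  have hd2 : (r - s) ^ 2 ≤ d ^ 2 := by
    have := sq_abs (r - s)
    nlinarith [abs_nonneg (r - s)]
  -- key2 : (a-b)²(a²+b²) ≤ d²(r²+s²)
  have key2 : (a - b) ^ 2 * (a ^ 2 + b ^ 2) ≤ d ^ 2 * (r ^ 2 + s ^ 2) := by
    have hab : 0 < (a + b) ^ 2 := by positivity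
    rw [← mul_le_mul_iff_of_pos_right hab]
    have lhs_eq : (a - b) ^ 2 * (a ^ 2 + b ^ 2) * (a + b) ^ 2
        = (r ^ 2 - s ^ 2) ^ 2 * (a ^ 2 + b ^ 2) := by
      linear_combination (a ^ 2 + b ^ 2) * ((a - b) * (a + b) + (r ^ 2 - s ^ 2)) * hdiff
    rw [lhs_eq]
    have e1 : (r ^ 2 - s ^ 2) ^ 2 * (a ^ 2 + b ^ 2)
        = (r - s) ^ 2 * ((r + s) ^ 2 * (a ^ 2 + b ^ 2)) := by ring
    have e2 : (r + s) ^ 2 * (a ^ 2 + b ^ 2) ≤ (r ^ 2 + s ^ 2) * (a + b) ^ 2 := by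
      nlinarith [step1]
    have hpos : 0 ≤ (r + s) ^ 2 * (a ^ 2 + b ^ 2) := by positivity
    calc (r ^ 2 - s ^ 2) ^ 2 * (a ^ 2 + b ^ 2)
        = (r - s) ^ 2 * ((r + s) ^ 2 * (a ^ 2 + b ^ 2)) := e1
      _ ≤ d ^ 2 * ((r ^ 2 + s ^ 2) * (a + b) ^ 2) := by
          apply mul_le_mul hd2 e2 hpos (by positivity)
      _ = d ^ 2 * (r ^ 2 + s ^ 2) * (a + b) ^ 2 := by ring
  -- denominator positive
  have e : d ^ 2 * (r ^ 2 + s ^ 2) = d ^ 2 * (a ^ 2 + b ^ 2) - 2 * (m * d) ^ 2 := by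
    linear_combination (-(d ^ 2)) * ha2 + (-(d ^ 2)) * hb2
  have hab2 : 0 < a ^ 2 + b ^ 2 := by positivity
  have hmd : 0 < (m * d) ^ 2 := pow_pos (mul_pos hm hd) 2
  have h : (a - b) ^ 2 * (a ^ 2 + b ^ 2) < d ^ 2 * (a ^ 2 + b ^ 2) := by linarith
  have hD : 0 < d ^ 2 - (a - b) ^ 2 := by
    have := lt_of_mul_lt_mul_right h hab2.le
    linarith
  have hgoal : d ^ 2 / (d ^ 2 - (a - b) ^ 2) ≤ (a ^ 2 + b ^ 2) / (2 * m ^ 2) := by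
    rw [div_le_div_iff₀ hD (by positivity)]
    have expand2 : (a ^ 2 + b ^ 2) * (d ^ 2 - (a - b) ^ 2)
        = d ^ 2 * (a ^ 2 + b ^ 2) - (a - b) ^ 2 * (a ^ 2 + b ^ 2) := by ring
    have e2 : d ^ 2 * (2 * m ^ 2) = 2 * (m * d) ^ 2 := by ring
    linarith [key2, e, e2, expand2]
  have : -((a - b) ^ 2 - d ^ 2) = d ^ 2 - (a - b) ^ 2 := by ring
  rw [this]
  calc d ^ 2 / (d ^ 2 - (a - b) ^ 2) ≤ (a ^ 2 + b ^ 2) / (2 * m ^ 2) := hgoal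
    _ = (r ^ 2 + s ^ 2 + 2 * m ^ 2) / (2 * m ^ 2) := by rw [ha2, hb2]; ring_nf

/-- The mass-shell ratio |𝐩₁-𝐩₂|²/(-(p₁-p₂)²) is bounded on compact subsets of the
  off-diagonal set, and is everywhere majorized by the polynomial (|𝐩₁|²+|𝐩₂|²+2m²)/(2m²). -/
theorem stmt_6 (m : ℝ) (hm : 0 < m) :
    (∀ K : Set (EuclideanSpace ℝ (Fin 3) × EuclideanSpace ℝ (Fin 3)),
      IsCompact K → K ⊆ {q | q.1 ≠ q.2} →
      ∃ C : ℝ, ∀ q ∈ K,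
        ‖q.1 - q.2‖ ^ 2 /
          (-((Real.sqrt (‖q.1‖ ^ 2 + m ^ 2) - Real.sqrt (‖q.2‖ ^ 2 + m ^ 2)) ^ 2
              - ‖q.1 - q.2‖ ^ 2)) ≤ C)
    ∧ ∀ p₁ p₂ : EuclideanSpace ℝ (Fin 3), p₁ ≠ p₂ →
        ‖p₁ - p₂‖ ^ 2 /
          (-((Real.sqrt (‖p₁‖ ^ 2 + m ^ 2) - Real.sqrt (‖p₂‖ ^ 2 + m ^ 2)) ^ 2
              - ‖p₁ - p₂‖ ^ 2))
        ≤ (‖p₁‖ ^ 2 + ‖p₂‖ ^ 2 + 2 * m ^ 2) / (2 * m ^ 2) := by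
  have main : ∀ p₁ p₂ : EuclideanSpace ℝ (Fin 3), p₁ ≠ p₂ →
      ‖p₁ - p₂‖ ^ 2 /
        (-((Real.sqrt (‖p₁‖ ^ 2 + m ^ 2) - Real.sqrt (‖p₂‖ ^ 2 + m ^ 2)) ^ 2
            - ‖p₁ - p₂‖ ^ 2))
      ≤ (‖p₁‖ ^ 2 + ‖p₂‖ ^ 2 + 2 * m ^ 2) / (2 * m ^ 2) := by
    intro p₁ p₂ hne
    exact key_ratio m ‖p₁‖ ‖p₂‖ ‖p₁ - p₂‖ hm (norm_nonneg _) (norm_nonneg _)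
      (norm_sub_pos_iff.mpr hne) (abs_norm_sub_norm_le p₁ p₂)
  refine ⟨fun K hK hKd => ?_, main⟩
  have hcont : ContinuousOn
      (fun q : EuclideanSpace ℝ (Fin 3) × EuclideanSpace ℝ (Fin 3) =>
        (‖q.1‖ ^ 2 + ‖q.2‖ ^ 2 + 2 * m ^ 2) / (2 * m ^ 2)) K := by
    fun_prop
  obtain ⟨C, hC⟩ := hK.exists_bound_of_continuousOn hcont
  refine ⟨C, fun q hq => ?_⟩
  calc ‖q.1 - q.2‖ ^ 2 /
        (-((Real.sqrt (‖q.1‖ ^ 2 + m ^ 2) - Real.sqrt (‖q.2‖ ^ 2 + m ^ 2)) ^ 2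
            - ‖q.1 - q.2‖ ^ 2))
      ≤ (‖q.1‖ ^ 2 + ‖q.2‖ ^ 2 + 2 * m ^ 2) / (2 * m ^ 2) := main q.1 q.2 (hKd hq)
    _ ≤ C := by
        have h := hC q hq
        rw [Real.norm_eq_abs, abs_of_nonneg (by positivity)] at h
        exact h
end

section
/- For m > 0 and any 𝐩, 𝐩' ∈ ℝ³ with 𝐩' ≠ 0, one has |1 / (|𝐩'|·(⟨𝐩'|𝐩⟩ - |𝐩'|·p₀(𝐩)))| < 4(m + |𝐩|)/(m²|𝐩'|²), where p₀(𝐩) = √(|𝐩|² + m²) and ⟨𝐩'|𝐩⟩ is the Euclidean inner product. -/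
/-- The estimation |1/(|𝐩'|(⟨𝐩'|𝐩⟩ - |𝐩'|p₀(𝐩)))| < 4(m+|𝐩|)/(m²|𝐩'|²) for m > 0, 𝐩' ≠ 0. -/
theorem stmt_7 (m : ℝ) (hm : 0 < m) (p p' : EuclideanSpace ℝ (Fin 3)) (hp' : p' ≠ 0) :
    |1 / (‖p'‖ * ((inner ℝ p' p : ℝ) - ‖p'‖ * Real.sqrt (‖p‖ ^ 2 + m ^ 2)))|
      < 4 * (m + ‖p‖) / (m ^ 2 * ‖p'‖ ^ 2) := by
  set r := ‖p‖ with hrdef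
  set s := ‖p'‖ with hsdef
  set c := (inner ℝ p' p : ℝ) with hcdef
  have hs0 : 0 < s := norm_pos_iff.mpr hp'
  have hr0 : 0 ≤ r := norm_nonneg _
  set E := Real.sqrt (r ^ 2 + m ^ 2) with hEdef
  have hE2 : E ^ 2 = r ^ 2 + m ^ 2 := Real.sq_sqrt (by positivity)
  have hE0 : 0 < E := Real.sqrt_pos.mpr (by positivity)
  have hEr : r < E := by nlinarith
  have hErm : E ≤ r + m := by nlinarith
  have hCS : c ≤ s * r := by
    have h := abs_real_inner_le_norm p' p
    calc c ≤ |c| := le_abs_self _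
    _ ≤ s * r := h
  have hden : s * (c - s * E) < 0 := by nlinarith [mul_le_mul_of_nonneg_left hCS hs0.le, mul_pos (mul_pos hs0 hs0) (sub_pos.mpr hEr)]
  rw [abs_div, abs_one, abs_of_neg hden, div_lt_div_iff₀ (by linarith) (by positivity)]
  nlinarith [mul_pos hs0 hs0, mul_le_mul_of_nonneg_left hCS (le_of_lt hs0),
    mul_pos (mul_pos hs0 hs0) (sub_pos.mpr hEr), sq_nonneg (E - r), sq_nonneg m,
    mul_pos hm hm, mul_nonneg hr0 (le_of_lt hs0)]
end

section
/- For k ∈ ℕ, the family of distributions on ℝ given by v ↦ 1/(v + iε)^{k+1} converges, as ε → 0⁺, in the space of tempered distributions, to the distribution v ↦ fp(1/v^{k+1}) - iπ·((-1)^k/k!)·δ^{(k)}(v), where fp denotes the finite part (principal-value-type regularization) and δ^{(k)} the k-th derivative of the Dirac delta. -/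
open MeasureTheory
open Filter Complex intervalIntegral Set

noncomputable def itD : ℕ → SchwartzMap ℝ ℂ → SchwartzMap ℝ ℂ
  | 0, φ => φ
  | (n+1), φ => itD n (SchwartzMap.derivCLM ℝ ℂ φ)

noncomputable def gf (ψ : SchwartzMap ℝ ℂ) : ℝ → ℂ :=
  fun v => ψ v - Set.indicator (Set.Icc (-1 : ℝ) 1) (fun _ => ψ 0) v

noncomputable def hf (ψ : SchwartzMap ℝ ℂ) : ℝ → ℂ := fun v => gf ψ v / (v : ℂ)


lemma itD_coe : ∀ (n : ℕ) (φ : SchwartzMap ℝ ℂ), ⇑(itD n φ) = iteratedDeriv n ⇑φ := by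
  intro n
  induction n with
  | zero => intro φ; simp [itD]
  | succ n ih =>
    intro φ
    rw [itD, ih, iteratedDeriv_succ']
    have : ⇑(SchwartzMap.derivCLM ℝ ℂ φ) = deriv ⇑φ := by
      funext x; exact SchwartzMap.derivCLM_apply ℝ φ x
    rw [this]

lemma sch_bound (ψ : SchwartzMap ℝ ℂ) : ∃ C, 0 < C ∧ ∀ x, ‖ψ x‖ ≤ C := by
  obtain ⟨C, hC, h⟩ := ψ.decay 0 0
  exact ⟨C, hC, fun x => by simpa using h x⟩

lemma sch_lip (ψ : SchwartzMap ℝ ℂ) : ∃ C : ℝ, 0 < C ∧ ∀ v : ℝ, ‖ψ v - ψ 0‖ ≤ C * |v| := by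
  obtain ⟨C, hC, h⟩ := sch_bound (SchwartzMap.derivCLM ℝ ℂ ψ)
  have hd : ∀ x, ‖deriv (⇑ψ) x‖ ≤ C := by
    intro x
    have := h x
    rwa [SchwartzMap.derivCLM_apply] at this
  have hL : LipschitzWith C.toNNReal ⇑ψ := by
    apply lipschitzWith_of_nnnorm_deriv_le ψ.differentiable
    intro x
    rw [← NNReal.coe_le_coe]
    simpa [Real.coe_toNNReal _ hC.le] using hd x
  refine ⟨C, hC, fun v => ?_⟩
  have := hL.dist_le_mul v 0
  simpa [dist_eq_norm, Real.coe_toNNReal _ hC.le, Real.dist_eq] using this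

lemma wne {ε : ℝ} (hε : 0 < ε) (x : ℝ) : (x : ℂ) + ε * Complex.I ≠ 0 := by
  intro h
  have : ((x : ℂ) + ε * Complex.I).im = 0 := by rw [h]; simp
  simp at this
  linarith

lemma wnorm {ε : ℝ} (hε : 0 < ε) (x : ℝ) : ε ≤ ‖(x : ℂ) + ε * Complex.I‖ := by
  have h1 : |((x : ℂ) + ε * Complex.I).im| ≤ ‖(x : ℂ) + ε * Complex.I‖ :=
    Complex.abs_im_le_norm _
  simpa [abs_of_pos hε] using h1

lemma cont_wpow_inv {ε : ℝ} (hε : 0 < ε) (m : ℕ) :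
    Continuous (fun x : ℝ => (((x : ℂ) + ε * Complex.I) ^ m)⁻¹) := by
  apply Continuous.inv₀
  · exact (Complex.continuous_ofReal.add continuous_const).pow m
  · intro x
    exact pow_ne_zero m (wne hε x)

lemma int_pow_inv {ε : ℝ} (hε : 0 < ε) (m : ℕ) (ψ : SchwartzMap ℝ ℂ) :
    Integrable (fun x : ℝ => ψ x * (((x : ℂ) + ε * Complex.I) ^ m)⁻¹) := by
  have := Integrable.bdd_mul (f := fun x : ℝ => (((x : ℂ) + ε * Complex.I) ^ m)⁻¹) (c := (ε⁻¹) ^ m)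
    (g := ⇑ψ) (ψ.integrable (μ := volume)) (cont_wpow_inv hε m).aestronglyMeasurable ?_
  · simpa [mul_comm] using this
  · refine Filter.Eventually.of_forall fun x => ?_
    rw [norm_inv, norm_pow, ← inv_pow]
    apply pow_le_pow_left₀ (by positivity)
    rw [inv_le_inv₀ (lt_of_lt_of_le hε (wnorm hε x)) hε]
    exact wnorm hε x

lemma hasDerivAt_w {ε : ℝ} (x : ℝ) :
    HasDerivAt (fun x : ℝ => (x : ℂ) + ε * Complex.I) 1 x := by
  simpa using (Complex.ofRealCLM.hasDerivAt (x := x)).add_const (ε * Complex.I)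

lemma ibp_step {ε : ℝ} (hε : 0 < ε) (j : ℕ) (φ : SchwartzMap ℝ ℂ) :
    ∫ x : ℝ, φ x * (((x : ℂ) + ε * Complex.I) ^ (j + 2))⁻¹
      = (1 / ((j : ℂ) + 1)) *
        ∫ x : ℝ, (SchwartzMap.derivCLM ℝ ℂ φ) x * (((x : ℂ) + ε * Complex.I) ^ (j + 1))⁻¹ := by
  set c : ℂ := -(1 : ℂ) / ((j : ℂ) + 1) with hc
  have hj : ((j : ℂ) + 1) ≠ 0 := Nat.cast_add_one_ne_zero j
  set q : ℝ → ℂ := fun x => (((x : ℂ) + ε * Complex.I) ^ (j + 1))⁻¹ with hq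
  set v : ℝ → ℂ := fun x => c * q x with hv
  set v' : ℝ → ℂ := fun x => (((x : ℂ) + ε * Complex.I) ^ (j + 2))⁻¹ with hv'
  have hvd : ∀ x : ℝ, HasDerivAt v (v' x) x := by
    intro x
    set z : ℂ := (x : ℂ) + ε * Complex.I with hz
    have hz0 : z ≠ 0 := wne hε x
    have h1 : HasDerivAt (fun w : ℂ => (w ^ (j + 1))⁻¹)
        (-((↑(j + 1) : ℂ) * z ^ j) / (z ^ (j + 1)) ^ 2) z := by
      have h := (hasDerivAt_pow (j + 1) z).inv (pow_ne_zero _ hz0); simp only [Nat.add_sub_cancel] at h; push_cast at h ⊢; exact h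
    have h2 := (h1.comp x (hasDerivAt_w x)).const_mul c
    have heq : c * (-((↑(j + 1) : ℂ) * z ^ j) / (z ^ (j + 1)) ^ 2 * 1) = (z ^ (j + 2))⁻¹ := by
      rw [hc]
      push_cast
      field_simp
      ring
    rw [heq] at h2
    exact h2
  have hu : ∀ x : ℝ, HasDerivAt (⇑φ) (deriv (⇑φ) x) x :=
    fun x => (φ.differentiable x).hasDerivAt
  have hder : ⇑(SchwartzMap.derivCLM ℝ ℂ φ) = deriv ⇑φ := by
    funext x; exact SchwartzMap.derivCLM_apply ℝ φ x
  have hint1 : Integrable ((⇑φ) * v') := by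
    simpa [hv', Pi.mul_def] using int_pow_inv hε (j + 2) φ
  have hint2 : Integrable (deriv (⇑φ) * v) := by
    have := (int_pow_inv hε (j + 1) (SchwartzMap.derivCLM ℝ ℂ φ)).const_mul c
    apply this.congr
    filter_upwards with x
    simp only [hv, hq, Pi.mul_def, hder]
    ring
  have hint3 : Integrable ((⇑φ) * v) := by
    have := (int_pow_inv hε (j + 1) φ).const_mul c
    apply this.congr
    filter_upwards with x
    simp only [hv, hq, Pi.mul_def]
    ring
  have key := integral_mul_deriv_eq_deriv_mul_of_integrable (fun x _ => hu x) (fun x _ => hvd x) hint1 hint2 hint3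
  rw [key]
  have : ∀ x : ℝ, deriv (⇑φ) x * v x = c * ((SchwartzMap.derivCLM ℝ ℂ φ) x * q x) := by
    intro x; simp only [hv, hder]; ring
  simp only [this]
  rw [MeasureTheory.integral_const_mul, hc]
  ring

lemma ibp (k : ℕ) : ∀ (φ : SchwartzMap ℝ ℂ) {ε : ℝ}, 0 < ε →
    ∫ x : ℝ, φ x * (((x : ℂ) + ε * Complex.I) ^ (k + 1))⁻¹
      = (1 / (Nat.factorial k : ℂ)) * ∫ x : ℝ, (itD k φ) x * ((x : ℂ) + ε * Complex.I)⁻¹ := by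
  induction k with
  | zero => intro φ ε hε; simp [itD]
  | succ k ih =>
    intro φ ε hε
    have h1 : k + 1 + 1 = k + 2 := rfl
    rw [h1, ibp_step hε k φ, ih (SchwartzMap.derivCLM ℝ ℂ φ) hε]
    have : itD (k + 1) φ = itD k (SchwartzMap.derivCLM ℝ ℂ φ) := rfl
    rw [this, ← mul_assoc]
    congr 1
    rw [Nat.factorial_succ]
    push_cast
    have h2 : ((k : ℂ) + 1) ≠ 0 := Nat.cast_add_one_ne_zero k
    have h3 : ((Nat.factorial k : ℂ)) ≠ 0 := Nat.cast_ne_zero.mpr (Nat.factorial_ne_zero k)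
    field_simp

variable (ψ : SchwartzMap ℝ ℂ)



lemma hf_meas : AEStronglyMeasurable (hf ψ) volume := by
  apply Measurable.aestronglyMeasurable
  apply Measurable.div
  · apply Measurable.sub (ψ.continuous.measurable)
    exact Measurable.indicator measurable_const measurableSet_Icc
  · exact Complex.measurable_ofReal
lemma hf_norm (v : ℝ) : ‖hf ψ v‖ = ‖gf ψ v‖ / |v| := by
  rw [hf, norm_div, Complex.norm_real, Real.norm_eq_abs]

lemma hf_int : Integrable (hf ψ) := by
  obtain ⟨C, hC, hlip⟩ := sch_lip ψ
  set B : ℝ → ℝ := fun v => Set.indicator (Set.Icc (-1 : ℝ) 1) (fun _ => C) v + ‖ψ v‖ with hB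
  have hBint : Integrable B := by
    apply Integrable.add ?_ ψ.integrable.norm
    rw [integrable_indicator_iff measurableSet_Icc]
    exact integrableOn_const measure_Icc_lt_top.ne
  apply Integrable.mono' hBint (hf_meas ψ)
  filter_upwards with v
  by_cases hv : v ∈ Set.Icc (-1 : ℝ) 1
  · have h1 : gf ψ v = ψ v - ψ 0 := by simp [gf, Set.indicator_of_mem hv]
    rw [hf_norm, h1, hB]
    simp only [Set.indicator_of_mem hv]
    rcases eq_or_ne v 0 with rfl | hv0
    · simp; positivity
    · have : ‖ψ v - ψ 0‖ / |v| ≤ C := by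
        rw [div_le_iff₀ (abs_pos.mpr hv0)]
        exact hlip v
      have h2 : (0:ℝ) ≤ ‖ψ v‖ := norm_nonneg _
      linarith
  · have h1 : gf ψ v = ψ v := by simp [gf, Set.indicator_of_notMem hv]
    have hv1 : 1 ≤ |v| := by
      simp only [Set.mem_Icc, not_and_or, not_le] at hv
      rcases hv with h | h
      · rw [abs_of_neg (by linarith)]; linarith
      · rw [abs_of_pos (by linarith)]; linarith
    rw [hf_norm, h1, hB]
    simp only [Set.indicator_of_notMem hv]
    have : ‖ψ v‖ / |v| ≤ ‖ψ v‖ := by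
      rw [div_le_iff₀ (by linarith)]
      nlinarith [norm_nonneg (ψ v)]
    linarith

-- the log integral over the two symmetric pieces is zero
lemma log_cancel {η : ℝ} (h0 : 0 < η) (h1 : η ≤ 1) :
    ∫ v in (Set.Icc (-1 : ℝ) (-η) ∪ Set.Icc η 1), ((v : ℂ))⁻¹ = 0 := by
  have hdisj : Disjoint (Set.Icc (-1 : ℝ) (-η)) (Set.Icc η 1) := by
    apply Set.disjoint_left.mpr
    rintro x ⟨_, hx2⟩ ⟨hx3, _⟩
    linarith
  have hcont : ∀ (a b : ℝ), (0 ∉ Set.Icc a b) → IntegrableOn (fun v : ℝ => ((v:ℂ))⁻¹) (Set.Icc a b) := by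
    intro a b hab
    apply ContinuousOn.integrableOn_compact isCompact_Icc
    apply ContinuousOn.inv₀ (Complex.continuous_ofReal.continuousOn)
    intro x hx
    simp only [ne_eq, Complex.ofReal_eq_zero]
    rintro rfl; exact hab hx
  have hi1 : IntegrableOn (fun v : ℝ => ((v:ℂ))⁻¹) (Set.Icc (-1 : ℝ) (-η)) :=
    hcont _ _ (by simp only [Set.mem_Icc]; intro ⟨_, h⟩; linarith)
  have hi2 : IntegrableOn (fun v : ℝ => ((v:ℂ))⁻¹) (Set.Icc η 1) :=
    hcont _ _ (by simp only [Set.mem_Icc]; intro ⟨h, _⟩; linarith)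
  rw [setIntegral_union hdisj measurableSet_Icc hi1 hi2]
  have e1 : ∀ (a b : ℝ), a ≤ b → ∫ v in Set.Icc a b, ((v:ℂ))⁻¹ = ∫ v in a..b, ((v:ℂ))⁻¹ := by
    intro a b hab
    rw [intervalIntegral.integral_of_le hab, integral_Icc_eq_integral_Ioc]
  rw [e1 _ _ (by linarith), e1 _ _ (by linarith)]
  have e2 : ∀ (a b : ℝ), (fun v : ℝ => ((v:ℂ))⁻¹) = fun v : ℝ => ((v⁻¹ : ℝ) : ℂ) := by
    intro a b; funext v; rw [Complex.ofReal_inv]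
  have e3 : ∫ v in (-1 : ℝ)..(-η), ((v:ℂ))⁻¹ = ((Real.log ((-η)/(-1)) : ℝ) : ℂ) := by
    rw [show (fun v : ℝ => ((v:ℂ))⁻¹) = fun v : ℝ => ((v⁻¹ : ℝ) : ℂ) from e2 0 0]
    rw [intervalIntegral.integral_ofReal, integral_inv_of_neg (by linarith) (by linarith)]
  have e4 : ∫ v in (η : ℝ)..1, ((v:ℂ))⁻¹ = ((Real.log (1/η) : ℝ) : ℂ) := by
    rw [show (fun v : ℝ => ((v:ℂ))⁻¹) = fun v : ℝ => ((v⁻¹ : ℝ) : ℂ) from e2 0 0]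
    rw [intervalIntegral.integral_ofReal, integral_inv_of_pos h0 one_pos]
  rw [e3, e4]
  rw [show (-η)/(-1) = η by ring]
  rw [← Complex.ofReal_add, ← Real.log_mul (by positivity) (by positivity)]
  rw [show η * (1/η) = 1 by field_simp]
  simp

lemma Smeas (η : ℝ) : MeasurableSet {x : ℝ | η ≤ |x|} := by
  exact (isClosed_le continuous_const _root_.continuous_abs).measurableSet

lemma inter_eq {η : ℝ} (h0 : 0 < η) (h1 : η ≤ 1) :
    {x : ℝ | η ≤ |x|} ∩ Set.Icc (-1 : ℝ) 1 = Set.Icc (-1 : ℝ) (-η) ∪ Set.Icc η 1 := by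
  ext x
  simp only [Set.mem_inter_iff, Set.mem_setOf_eq, Set.mem_Icc, Set.mem_union, le_abs]
  constructor
  · rintro ⟨h, h2, h3⟩
    rcases h with h | h
    · right; exact ⟨h, h3⟩
    · left; exact ⟨h2, by linarith⟩
  · rintro (⟨h2, h3⟩ | ⟨h2, h3⟩)
    · exact ⟨Or.inr (by linarith), h2, by linarith⟩
    · exact ⟨Or.inl h2, by linarith, h3⟩

lemma psi_div_intOn (ψ : SchwartzMap ℝ ℂ) {η : ℝ} (h0 : 0 < η) :
    IntegrableOn (fun v : ℝ => ψ v / (v : ℂ)) {x : ℝ | η ≤ |x|} := by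
  apply Integrable.mono'
    (((ψ.integrable (μ := volume)).norm.const_mul η⁻¹).restrict (s := {x : ℝ | η ≤ |x|}))
  · apply AEStronglyMeasurable.restrict
    apply Measurable.aestronglyMeasurable
    exact (ψ.continuous.measurable).div Complex.measurable_ofReal
  · rw [ae_restrict_iff' (Smeas η)]
    filter_upwards with v hv
    rw [norm_div, Complex.norm_real, Real.norm_eq_abs]
    calc ‖ψ v‖ / |v| ≤ ‖ψ v‖ / η := div_le_div_of_nonneg_left (norm_nonneg _) h0 hv
    _ = η⁻¹ * ‖ψ v‖ := by rw [div_eq_inv_mul]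

-- eventual equality
lemma eq_on_S (ψ : SchwartzMap ℝ ℂ) {η : ℝ} (h0 : 0 < η) (h1 : η ≤ 1) :
    ∫ v in {x : ℝ | η ≤ |x|}, ψ v / (v : ℂ) = ∫ v in {x : ℝ | η ≤ |x|}, hf ψ v := by
  have hS := Smeas η
  have hint1 := psi_div_intOn ψ h0
  have hint2 : IntegrableOn (hf ψ) {x : ℝ | η ≤ |x|} := (hf_int ψ).integrableOn
  have key : ∫ v in {x : ℝ | η ≤ |x|}, (ψ v / (v : ℂ) - hf ψ v) =
      ∫ v in {x : ℝ | η ≤ |x|}, Set.indicator (Set.Icc (-1:ℝ) 1) (fun v => (ψ 0 : ℂ) * (v:ℂ)⁻¹) v := by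
    apply setIntegral_congr_fun hS
    intro v hv
    have hv0 : v ≠ 0 := by
      intro h; rw [h] at hv; simp at hv; linarith
    simp only [hf, gf]
    rw [sub_div, sub_sub_cancel]
    by_cases hmem : v ∈ Set.Icc (-1:ℝ) 1
    · rw [Set.indicator_of_mem hmem, Set.indicator_of_mem hmem, div_eq_mul_inv]
    · rw [Set.indicator_of_notMem hmem, Set.indicator_of_notMem hmem, zero_div]
  rw [integral_sub hint1 hint2] at key
  rw [setIntegral_indicator measurableSet_Icc] at key
  rw [inter_eq h0 h1] at key
  rw [MeasureTheory.integral_const_mul, log_cancel h0 h1, mul_zero] at key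
  exact sub_eq_zero.mp key

lemma partA (ψ : SchwartzMap ℝ ℂ) :
    Tendsto (fun η : ℝ => ∫ v in {x : ℝ | η ≤ |x|}, ψ v / (v : ℂ))
      (nhdsWithin 0 (Set.Ioi 0)) (nhds (∫ v : ℝ, hf ψ v)) := by
  have h1 : Tendsto (fun η : ℝ => ∫ v in {x : ℝ | η ≤ |x|}, hf ψ v)
      (nhdsWithin 0 (Set.Ioi 0)) (nhds (∫ v : ℝ, hf ψ v)) := by
    have hrw : ∀ η : ℝ, ∫ v in {x : ℝ | η ≤ |x|}, hf ψ v
        = ∫ v : ℝ, Set.indicator {x : ℝ | η ≤ |x|} (hf ψ) v := by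
      intro η; rw [MeasureTheory.integral_indicator (Smeas η)]
    simp only [hrw]
    apply MeasureTheory.tendsto_integral_filter_of_dominated_convergence (fun v => ‖hf ψ v‖)
    · filter_upwards with η
      exact (hf_meas ψ).indicator (Smeas η)
    · filter_upwards with η
      filter_upwards with v
      exact norm_indicator_le_norm_self (hf ψ) v
    · exact (hf_int ψ).norm
    · have h0 : ∀ᵐ v : ℝ, v ≠ 0 := by
        rw [ae_iff]
        simp only [ne_eq, not_not]
        have : {a : ℝ | a = 0} = {(0:ℝ)} := by ext x; simp
        rw [this]
        exact Real.volume_singleton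
      filter_upwards [h0] with v hv
      apply Tendsto.congr' _ tendsto_const_nhds
      have hmem : Set.Ioo (0:ℝ) |v| ∈ nhdsWithin (0:ℝ) (Set.Ioi 0) := by
        apply Ioo_mem_nhdsGT_of_mem
        exact ⟨le_refl _, abs_pos.mpr hv⟩
      filter_upwards [hmem] with η hη
      rw [Set.indicator_of_mem]
      exact le_of_lt hη.2
  apply h1.congr'
  filter_upwards [Ioo_mem_nhdsGT_of_mem (Set.left_mem_Ico.mpr one_pos)] with η hη
  exact (eq_on_S ψ hη.1 hη.2.le).symm

lemma partB (ψ : SchwartzMap ℝ ℂ) :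
    Tendsto (fun ε : ℝ => ∫ v : ℝ, ((ε / (v ^ 2 + ε ^ 2) : ℝ) : ℂ) * ψ v)
      (nhdsWithin 0 (Set.Ioi 0)) (nhds ((Real.pi : ℂ) * ψ 0)) := by
  have key : ∀ ε : ℝ, 0 < ε →
      ∫ v : ℝ, ((ε / (v ^ 2 + ε ^ 2) : ℝ) : ℂ) * ψ v
        = ∫ x : ℝ, (((1 + x ^ 2)⁻¹ : ℝ) : ℂ) * ψ (ε * x) := by
    intro ε hε
    have sub := MeasureTheory.Measure.integral_comp_mul_left
      (fun v : ℝ => ((ε / (v ^ 2 + ε ^ 2) : ℝ) : ℂ) * ψ v) ε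
    have habs : |ε⁻¹| = ε⁻¹ := abs_of_pos (by positivity)
    rw [habs] at sub
    have : ∫ v : ℝ, ((ε / (v ^ 2 + ε ^ 2) : ℝ) : ℂ) * ψ v
        = ε • ∫ x : ℝ, ((ε / ((ε * x) ^ 2 + ε ^ 2) : ℝ) : ℂ) * ψ (ε * x) := by
      rw [sub, smul_smul, mul_inv_cancel₀ (ne_of_gt hε), one_smul]
    rw [this, ← MeasureTheory.integral_smul]
    congr 1
    funext x
    rw [Complex.real_smul, ← mul_assoc, ← Complex.ofReal_mul]
    congr 2
    field_simp
    ring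
  have h2 : Tendsto (fun ε : ℝ => ∫ x : ℝ, (((1 + x ^ 2)⁻¹ : ℝ) : ℂ) * ψ (ε * x))
      (nhdsWithin 0 (Set.Ioi 0)) (nhds ((Real.pi : ℂ) * ψ 0)) := by
    obtain ⟨C, hC, hbd⟩ := sch_bound ψ
    have hval : ((Real.pi : ℂ)) * ψ 0 = ∫ x : ℝ, (((1 + x ^ 2)⁻¹ : ℝ) : ℂ) * ψ 0 := by
      rw [MeasureTheory.integral_mul_const]
      congr 1
      have : ∀ a : ℝ, (((1 + a ^ 2)⁻¹ : ℝ) : ℂ) = ((1 + a ^ 2)⁻¹ : ℝ) • (1 : ℂ) := by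
        intro a; rw [Complex.real_smul, mul_one]
      simp only [this]
      rw [_root_.integral_smul_const, integral_univ_inv_one_add_sq, Complex.real_smul, mul_one]
    rw [hval]
    apply MeasureTheory.tendsto_integral_filter_of_dominated_convergence
      (fun x => (1 + x ^ 2)⁻¹ * C)
    · filter_upwards with ε
      apply Continuous.aestronglyMeasurable
      exact (Complex.continuous_ofReal.comp ((continuous_const.add (continuous_pow 2)).inv₀ (fun x => (by positivity : (0:ℝ) < 1 + x ^ 2).ne'))).mul
        (ψ.continuous.comp (continuous_const.mul continuous_id))
    · filter_upwards with ε
      filter_upwards with x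
      rw [norm_mul, Complex.norm_real, Real.norm_eq_abs, abs_of_pos (by positivity)]
      exact mul_le_mul_of_nonneg_left (hbd _) (by positivity)
    · exact integrable_inv_one_add_sq.mul_const C
    · filter_upwards with x
      apply Tendsto.const_mul
      have h3 : Tendsto (fun ε : ℝ => ε * x) (nhdsWithin 0 (Set.Ioi 0)) (nhds 0) := by
        have := (continuous_mul_right x).tendsto (0 : ℝ)
        rw [zero_mul] at this
        exact this.mono_left nhdsWithin_le_nhds
      exact (ψ.continuous.tendsto 0).comp h3
  apply h2.congr'
  filter_upwards [self_mem_nhdsWithin] with ε hε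
  exact (key ε hε).symm

lemma kbound {ε : ℝ} (hε : 0 < ε) (v : ℝ) : |v / (v ^ 2 + ε ^ 2)| ≤ (2 * ε)⁻¹ := by
  have h2 : (0:ℝ) < v ^ 2 + ε ^ 2 := add_pos_of_nonneg_of_pos (sq_nonneg v) (pow_pos hε 2)
  rw [abs_div, abs_of_pos h2, inv_eq_one_div, div_le_div_iff₀ h2 (by positivity)]
  nlinarith [sq_nonneg (|v| - ε), abs_nonneg v, _root_.sq_abs v]

lemma kbound2 {ε v : ℝ} : |v / (v ^ 2 + ε ^ 2)| * |v| ≤ 1 := by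
  rcases eq_or_ne v 0 with rfl | hv
  · simp
  rcases eq_or_ne ε 0 with rfl | he
  · rw [abs_div, abs_of_pos (by positivity : (0:ℝ) < v^2 + 0^2)]
    rw [div_mul_eq_mul_div, div_le_one (by positivity)]
    nlinarith [_root_.sq_abs v]
  · have h2 : (0:ℝ) < v ^ 2 + ε ^ 2 := by positivity
    rw [abs_div, abs_of_pos h2, div_mul_eq_mul_div, div_le_one h2]
    nlinarith [_root_.sq_abs v, sq_nonneg ε]

lemma odd_zero {ε : ℝ} (hε : 0 < ε) :
    ∫ v in Set.Icc (-1 : ℝ) 1, ((v / (v ^ 2 + ε ^ 2) : ℝ) : ℂ) = 0 := by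
  have hcont : Continuous (fun v : ℝ => v / (v ^ 2 + ε ^ 2)) := by
    apply Continuous.div continuous_id ((continuous_pow 2).add continuous_const)
    intro x; exact (add_pos_of_nonneg_of_pos (sq_nonneg x) (pow_pos hε 2)).ne'
  have hftc : ∀ x ∈ Set.uIcc (-1 : ℝ) 1,
      HasDerivAt (fun v : ℝ => (1 / 2) * Real.log (v ^ 2 + ε ^ 2)) (x / (x ^ 2 + ε ^ 2)) x := by
    intro x _
    have h1 : HasDerivAt (fun v : ℝ => v ^ 2 + ε ^ 2) (2 * x) x := by
      simpa using ((hasDerivAt_pow 2 x).add_const (ε ^ 2))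
    have h2 : HasDerivAt (fun v : ℝ => Real.log (v ^ 2 + ε ^ 2))
        ((x ^ 2 + ε ^ 2)⁻¹ * (2 * x)) x :=
      (Real.hasDerivAt_log (by positivity)).comp x h1
    have := h2.const_mul (1 / 2 : ℝ)
    refine this.congr_deriv ?_
    ring
  have hreal : ∫ v in (-1 : ℝ)..1, v / (v ^ 2 + ε ^ 2) = 0 := by
    rw [intervalIntegral.integral_eq_sub_of_hasDerivAt hftc
      (hcont.intervalIntegrable _ _)]
    norm_num
  have : ∫ v in Set.Icc (-1 : ℝ) 1, ((v / (v ^ 2 + ε ^ 2) : ℝ) : ℂ)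
      = ((∫ v in Set.Icc (-1 : ℝ) 1, v / (v ^ 2 + ε ^ 2) : ℝ) : ℂ) := _root_.integral_ofReal
  rw [this, MeasureTheory.integral_Icc_eq_integral_Ioc,
    ← intervalIntegral.integral_of_le (by norm_num : (-1:ℝ) ≤ 1), hreal]
  simp

lemma partC (ψ : SchwartzMap ℝ ℂ) :
    Tendsto (fun ε : ℝ => ∫ v : ℝ, ((v / (v ^ 2 + ε ^ 2) : ℝ) : ℂ) * ψ v)
      (nhdsWithin 0 (Set.Ioi 0)) (nhds (∫ v : ℝ, hf ψ v)) := by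
  have hmeas_k : ∀ ε : ℝ, AEStronglyMeasurable
      (fun v : ℝ => ((v / (v ^ 2 + ε ^ 2) : ℝ) : ℂ)) volume := by
    intro ε
    apply Measurable.aestronglyMeasurable
    exact Complex.measurable_ofReal.comp (measurable_id.div ((measurable_id.pow_const 2).add measurable_const))
  -- integrability of k_ε * indicator, for ε > 0
  have hind_int : Integrable (fun v : ℝ =>
      Set.indicator (Set.Icc (-1 : ℝ) 1) (fun _ => ψ 0) v) := by
    rw [integrable_indicator_iff measurableSet_Icc]
    exact integrableOn_const measure_Icc_lt_top.ne
  -- step 1: for ε > 0, the integrals differ by the odd-kernel term which vanishes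
  have key : ∀ ε : ℝ, 0 < ε →
      ∫ v : ℝ, ((v / (v ^ 2 + ε ^ 2) : ℝ) : ℂ) * ψ v
        = ∫ v : ℝ, ((v / (v ^ 2 + ε ^ 2) : ℝ) : ℂ) * gf ψ v := by
    intro ε hε
    have hbd : ∃ C, ∀ v : ℝ, ‖((v / (v ^ 2 + ε ^ 2) : ℝ) : ℂ)‖ ≤ C :=
      ⟨(2 * ε)⁻¹, fun v => by rw [Complex.norm_real, Real.norm_eq_abs]; exact kbound hε v⟩
    have hint1 : Integrable (fun v : ℝ => ((v / (v ^ 2 + ε ^ 2) : ℝ) : ℂ) * ψ v) :=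
      Integrable.bdd_mul (ψ.integrable (μ := volume)) (hmeas_k ε) (Filter.Eventually.of_forall hbd.choose_spec)
    have hint2 : Integrable (fun v : ℝ => ((v / (v ^ 2 + ε ^ 2) : ℝ) : ℂ) *
        Set.indicator (Set.Icc (-1 : ℝ) 1) (fun _ => ψ 0) v) :=
      Integrable.bdd_mul hind_int (hmeas_k ε) (Filter.Eventually.of_forall hbd.choose_spec)
    have hint3 : Integrable (fun v : ℝ => ((v / (v ^ 2 + ε ^ 2) : ℝ) : ℂ) * gf ψ v) := by
      apply (hint1.sub hint2).congr
      filter_upwards with v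
      simp only [Pi.sub_apply, gf]
      ring
    have hps : (fun v : ℝ => ((v / (v ^ 2 + ε ^ 2) : ℝ) : ℂ) * ψ v)
        = fun v : ℝ => ((v / (v ^ 2 + ε ^ 2) : ℝ) : ℂ) * gf ψ v
          + ((v / (v ^ 2 + ε ^ 2) : ℝ) : ℂ) *
            Set.indicator (Set.Icc (-1 : ℝ) 1) (fun _ => ψ 0) v := by
      funext v; simp only [gf]; ring
    rw [hps, MeasureTheory.integral_add hint3 hint2]
    have hzero : ∫ v : ℝ, ((v / (v ^ 2 + ε ^ 2) : ℝ) : ℂ) *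
        Set.indicator (Set.Icc (-1 : ℝ) 1) (fun _ => ψ 0) v = 0 := by
      have hip : ∀ v : ℝ, ((v / (v ^ 2 + ε ^ 2) : ℝ) : ℂ) *
          Set.indicator (Set.Icc (-1 : ℝ) 1) (fun _ => ψ 0) v
          = Set.indicator (Set.Icc (-1 : ℝ) 1)
              (fun v => ((v / (v ^ 2 + ε ^ 2) : ℝ) : ℂ) * ψ 0) v := by
        intro v
        by_cases hv : v ∈ Set.Icc (-1 : ℝ) 1
        · rw [Set.indicator_of_mem hv, Set.indicator_of_mem hv]
        · rw [Set.indicator_of_notMem hv, Set.indicator_of_notMem hv, mul_zero]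
      simp only [hip]
      rw [MeasureTheory.integral_indicator measurableSet_Icc,
        MeasureTheory.integral_mul_const, odd_zero hε, zero_mul]
    rw [hzero, add_zero]
  -- step 2: dominated convergence for the regular part
  have h2 : Tendsto (fun ε : ℝ => ∫ v : ℝ, ((v / (v ^ 2 + ε ^ 2) : ℝ) : ℂ) * gf ψ v)
      (nhdsWithin 0 (Set.Ioi 0)) (nhds (∫ v : ℝ, hf ψ v)) := by
    have hgm : AEStronglyMeasurable (gf ψ) volume := by
      apply Measurable.aestronglyMeasurable
      exact (ψ.continuous.measurable).sub (Measurable.indicator measurable_const measurableSet_Icc)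
    apply MeasureTheory.tendsto_integral_filter_of_dominated_convergence (fun v => ‖hf ψ v‖)
    · filter_upwards with ε
      exact (hmeas_k ε).mul hgm
    · filter_upwards with ε
      filter_upwards with v
      rw [norm_mul, Complex.norm_real, Real.norm_eq_abs]
      have hnf : ‖hf ψ v‖ = ‖gf ψ v‖ / |v| := by
        rw [hf, norm_div, Complex.norm_real, Real.norm_eq_abs]
      rw [hnf]
      rcases eq_or_ne v 0 with rfl | hv
      · simp
      · rw [le_div_iff₀ (abs_pos.mpr hv), mul_comm |_| ‖gf ψ v‖, mul_assoc]
        calc ‖gf ψ v‖ * (|v / (v ^ 2 + ε ^ 2)| * |v|) ≤ ‖gf ψ v‖ * 1 :=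
          mul_le_mul_of_nonneg_left (by rw [mul_comm]; exact (by rw [mul_comm]; exact kbound2)) (norm_nonneg _)
        _ = ‖gf ψ v‖ := mul_one _
    · exact (hf_int ψ).norm
    · have h0 : ∀ᵐ v : ℝ, v ≠ (0:ℝ) := by
        rw [ae_iff]
        simp only [ne_eq, not_not]
        have : {a : ℝ | a = 0} = {(0:ℝ)} := by ext x; simp
        rw [this]
        exact Real.volume_singleton
      filter_upwards [h0] with v hv
      have hden : Tendsto (fun ε : ℝ => v / (v ^ 2 + ε ^ 2)) (nhdsWithin 0 (Set.Ioi 0))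
          (nhds (v / (v ^ 2 + 0 ^ 2))) := by
        apply Tendsto.mono_left _ nhdsWithin_le_nhds
        apply Tendsto.div tendsto_const_nhds
        · exact (continuous_const.add (continuous_pow 2)).tendsto 0
        · simp only [ne_eq]
          intro h
          apply hv
          nlinarith [sq_nonneg v]
      have hT := ((Complex.continuous_ofReal.tendsto _).comp hden).mul_const (gf ψ v)
      have hlim : ((v / (v ^ 2 + 0 ^ 2) : ℝ) : ℂ) * gf ψ v = hf ψ v := by
        have hv2 : (v : ℂ) ≠ 0 := Complex.ofReal_ne_zero.mpr hv
        rw [hf]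
        push_cast
        field_simp
        ring
      rw [← hlim]
      exact hT
  apply h2.congr'
  filter_upwards [self_mem_nhdsWithin] with ε hε
  exact (key ε hε).symm

lemma decomp {ε : ℝ} (hε : 0 < ε) (v : ℝ) (z : ℂ) :
    z * ((v : ℂ) + ε * Complex.I)⁻¹
      = ((v / (v ^ 2 + ε ^ 2) : ℝ) : ℂ) * z - Complex.I * (((ε / (v ^ 2 + ε ^ 2) : ℝ) : ℂ) * z) := by
  have h2 : (0:ℝ) < v ^ 2 + ε ^ 2 := add_pos_of_nonneg_of_pos (sq_nonneg v) (pow_pos hε 2)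
  have hd : ((v : ℂ) ^ 2 + (ε : ℂ) ^ 2) ≠ 0 := by
    have : (v:ℂ)^2+(ε:ℂ)^2 = ((v^2+ε^2 : ℝ) : ℂ) := by push_cast; ring
    rw [this]
    exact_mod_cast ne_of_gt h2
  have hw : (v : ℂ) + ε * Complex.I ≠ 0 := by
    intro h
    have : ((v : ℂ) + ε * Complex.I).im = 0 := by rw [h]; simp
    simp at this
    linarith
  push_cast
  field_simp
  linear_combination (z * (ε:ℂ)^2) * Complex.I_sq

lemma partD (ψ : SchwartzMap ℝ ℂ) :
    Tendsto (fun ε : ℝ => ∫ v : ℝ, ψ v * ((v : ℂ) + ε * Complex.I)⁻¹)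
      (nhdsWithin 0 (Set.Ioi 0))
      (nhds ((∫ v : ℝ, hf ψ v) - Complex.I * ((Real.pi : ℂ) * ψ 0))) := by
  have h := (partC ψ).sub ((partB ψ).const_mul Complex.I)
  apply h.congr'
  filter_upwards [self_mem_nhdsWithin] with ε hε
  have hε' : (0:ℝ) < ε := hε
  have hmk : AEStronglyMeasurable (fun v : ℝ => ((v / (v ^ 2 + ε ^ 2) : ℝ) : ℂ)) volume :=
    (Complex.measurable_ofReal.comp
      (measurable_id.div ((measurable_id.pow_const 2).add measurable_const))).aestronglyMeasurable
  have hmp : AEStronglyMeasurable (fun v : ℝ => ((ε / (v ^ 2 + ε ^ 2) : ℝ) : ℂ)) volume :=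
    (Complex.measurable_ofReal.comp
      (measurable_const.div ((measurable_id.pow_const 2).add measurable_const))).aestronglyMeasurable
  have hint1 : Integrable (fun v : ℝ => ((v / (v ^ 2 + ε ^ 2) : ℝ) : ℂ) * ψ v) :=
    Integrable.bdd_mul (c := (2 * ε)⁻¹) (ψ.integrable (μ := volume)) hmk
      (Filter.Eventually.of_forall fun v => by rw [Complex.norm_real, Real.norm_eq_abs]; exact kbound hε' v)
  have hint2 : Integrable (fun v : ℝ => ((ε / (v ^ 2 + ε ^ 2) : ℝ) : ℂ) * ψ v) := by
    apply Integrable.bdd_mul (c := ε⁻¹) (ψ.integrable (μ := volume)) hmp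
    refine Filter.Eventually.of_forall fun v => ?_
    rw [Complex.norm_real, Real.norm_eq_abs]
    have h2 : (0:ℝ) < v ^ 2 + ε ^ 2 := add_pos_of_nonneg_of_pos (sq_nonneg v) (pow_pos hε' 2)
    rw [abs_div, abs_of_pos h2, abs_of_pos hε', div_le_iff₀ h2]
    rw [inv_mul_eq_div, le_div_iff₀ hε']
    nlinarith [sq_nonneg v]
  have : ∀ v : ℝ, ψ v * ((v : ℂ) + ε * Complex.I)⁻¹
      = ((v / (v ^ 2 + ε ^ 2) : ℝ) : ℂ) * ψ v
        - Complex.I * (((ε / (v ^ 2 + ε ^ 2) : ℝ) : ℂ) * ψ v) := fun v => decomp hε' v (ψ v)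
  simp only [this]
  rw [MeasureTheory.integral_sub hint1 (hint2.const_mul Complex.I),
    MeasureTheory.integral_const_mul]

/-- Sokhotski–Plemelj for higher powers: as ε → 0⁺, the tempered distribution
  v ↦ 1/(v+iε)^{k+1} converges (weakly, i.e. evaluated on every Schwartz test function) to
  fp(1/v^{k+1}) - iπ((-1)^k/k!)·δ^{(k)}, where the finite part is
  ⟨fp(1/v^{k+1}), φ⟩ = (1/k!)·pv⟨1/v, φ^{(k)}⟩ and ⟨δ^{(k)}, φ⟩ = (-1)^k φ^{(k)}(0). -/
theorem stmt_14 (k : ℕ) (φ : SchwartzMap ℝ ℂ) :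
    ∃ P : ℂ,
      Filter.Tendsto
        (fun η : ℝ => ∫ v in {x : ℝ | η ≤ |x|}, iteratedDeriv k (⇑φ) v / (v : ℂ))
        (nhdsWithin 0 (Set.Ioi 0)) (nhds P) ∧
      Filter.Tendsto
        (fun ε : ℝ => ∫ v : ℝ, φ v / ((v : ℂ) + (ε : ℂ) * Complex.I) ^ (k + 1))
        (nhdsWithin 0 (Set.Ioi 0))
        (nhds ((1 / (Nat.factorial k : ℂ)) * P -
          Complex.I * (Real.pi : ℂ) * ((-1 : ℂ) ^ k / (Nat.factorial k : ℂ)) *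
            ((-1 : ℂ) ^ k * iteratedDeriv k (⇑φ) 0))) := by
  set ψ : SchwartzMap ℝ ℂ := itD k φ with hψ
  have hcoe : ⇑ψ = iteratedDeriv k ⇑φ := itD_coe k φ
  refine ⟨∫ v : ℝ, hf ψ v, ?_, ?_⟩
  · have := partA ψ
    simpa only [hcoe] using this
  · have hD := (partD ψ).const_mul ((1 : ℂ) / (Nat.factorial k : ℂ))
    have htarget : (1 / (Nat.factorial k : ℂ)) * (∫ v : ℝ, hf ψ v) -
          Complex.I * (Real.pi : ℂ) * ((-1 : ℂ) ^ k / (Nat.factorial k : ℂ)) *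
            ((-1 : ℂ) ^ k * iteratedDeriv k (⇑φ) 0)
        = (1 / (Nat.factorial k : ℂ)) *
            ((∫ v : ℝ, hf ψ v) - Complex.I * ((Real.pi : ℂ) * ψ 0)) := by
      rw [← hcoe]
      have hsq : ((-1 : ℂ) ^ k) * ((-1 : ℂ) ^ k) = 1 := by
        rw [← mul_pow]; norm_num
      field_simp
      ring_nf
      rw [show ((-1 : ℂ)) ^ (k * 2) = 1 by rw [mul_comm, pow_mul]; norm_num]
      ring
    rw [htarget]
    apply hD.congr'
    filter_upwards [self_mem_nhdsWithin] with ε hε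
    have hε' : (0:ℝ) < ε := hε
    rw [← ibp k φ hε']
    congr 1
end

section
/- Let m > 0, and on the open set U = {(𝐩₁,𝐩₂) ∈ ℝ³×ℝ³ : 𝐩₁ ≠ 𝐩₂} consider the time-time component T₀₀(𝐩₁,𝐩₂) = (p₁-p₂)₀(p₁-p₂)₀/((p₁-p₂)²) with pᵢ on the positive mass-m shell. Then T₀₀ = 1 + |𝐩₁-𝐩₂|²/((p₁-p₂)²), and |T₀₀(𝐩₁,𝐩₂)| ≤ (|𝐩₁|² + |𝐩₂|²)/(2m²) on U. -/
/-- The time-time component T₀₀ = (p₁-p₂)₀²/((p₁-p₂)²) of the transverse tensor on the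
  mass-m shell satisfies T₀₀ = 1 + |𝐩₁-𝐩₂|²/((p₁-p₂)²) and |T₀₀| ≤ (|𝐩₁|²+|𝐩₂|²)/(2m²)
  off the diagonal. -/
theorem stmt_16 (m : ℝ) (hm : 0 < m) (p₁ p₂ : EuclideanSpace ℝ (Fin 3)) (hne : p₁ ≠ p₂) :
    (Real.sqrt (‖p₁‖ ^ 2 + m ^ 2) - Real.sqrt (‖p₂‖ ^ 2 + m ^ 2)) ^ 2 /
        ((Real.sqrt (‖p₁‖ ^ 2 + m ^ 2) - Real.sqrt (‖p₂‖ ^ 2 + m ^ 2)) ^ 2 - ‖p₁ - p₂‖ ^ 2)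
      = 1 + ‖p₁ - p₂‖ ^ 2 /
        ((Real.sqrt (‖p₁‖ ^ 2 + m ^ 2) - Real.sqrt (‖p₂‖ ^ 2 + m ^ 2)) ^ 2 - ‖p₁ - p₂‖ ^ 2)
    ∧ |(Real.sqrt (‖p₁‖ ^ 2 + m ^ 2) - Real.sqrt (‖p₂‖ ^ 2 + m ^ 2)) ^ 2 /
        ((Real.sqrt (‖p₁‖ ^ 2 + m ^ 2) - Real.sqrt (‖p₂‖ ^ 2 + m ^ 2)) ^ 2 - ‖p₁ - p₂‖ ^ 2)|
      ≤ (‖p₁‖ ^ 2 + ‖p₂‖ ^ 2) / (2 * m ^ 2) := by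
  set P := ‖p₁‖ with hPdef
  set Q := ‖p₂‖ with hQdef
  set n := ‖p₁ - p₂‖ with hndef
  have hP : 0 ≤ P := norm_nonneg _
  have hQ : 0 ≤ Q := norm_nonneg _
  have hn : 0 < n := by
    rw [hndef, norm_pos_iff, sub_ne_zero]
    exact hne
  set a := Real.sqrt (P ^ 2 + m ^ 2) with hadef
  set b := Real.sqrt (Q ^ 2 + m ^ 2) with hbdef
  have ha2 : a ^ 2 = P ^ 2 + m ^ 2 := Real.sq_sqrt (by positivity)
  have hb2 : b ^ 2 = Q ^ 2 + m ^ 2 := Real.sq_sqrt (by positivity)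
  have ha : 0 ≤ a := Real.sqrt_nonneg _
  have hb : 0 ≤ b := Real.sqrt_nonneg _
  have hPQ : |P - Q| ≤ n := abs_norm_sub_norm_le p₁ p₂
  clear_value P Q n a b
  have hab : P * Q + m ^ 2 ≤ a * b := by
    nlinarith [sq_nonneg (P - Q), mul_nonneg ha hb, mul_nonneg hP hQ, sq_nonneg m, hm]
  have hPQ2 : (P - Q) ^ 2 ≤ n ^ 2 := by
    have h := sq_abs (P - Q)
    nlinarith [abs_nonneg (P - Q)]
  have hid : (a - b) * (a + b) = P ^ 2 - Q ^ 2 := by linear_combination ha2 - hb2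
  have h1 : (a - b) ^ 2 * (a + b) ^ 2 = (P + Q) ^ 2 * (P - Q) ^ 2 := by
    linear_combination ((a - b) * (a + b) + (P ^ 2 - Q ^ 2)) * hid
  have h2 : (P + Q) ^ 2 + 4 * m ^ 2 ≤ (a + b) ^ 2 := by nlinarith [hab]
  have hapos : 0 < a + b := by nlinarith [hm, ha, hb]
  have hK : 0 < (a + b) ^ 2 := by positivity
  have e2 : (P + Q) ^ 2 * (P - Q) ^ 2 ≤ (P + Q) ^ 2 * n ^ 2 :=
    mul_le_mul_of_nonneg_left hPQ2 (sq_nonneg _)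
  have hD : (a - b) ^ 2 < n ^ 2 := by
    by_contra h
    push_neg at h
    have t1 : n ^ 2 * ((P + Q) ^ 2 + 4 * m ^ 2) ≤ (a - b) ^ 2 * (a + b) ^ 2 :=
      mul_le_mul h h2 (by positivity) (sq_nonneg _)
    have h4 : (0:ℝ) < m ^ 2 * n ^ 2 := by positivity
    linarith [t1, h1.le, e2, h4]
  have hDneg : (a - b) ^ 2 - n ^ 2 < 0 := by linarith
  have hDne : (a - b) ^ 2 - n ^ 2 ≠ 0 := ne_of_lt hDneg
  constructor
  · field_simp
    ring
  · have hT : (a - b) ^ 2 / ((a - b) ^ 2 - n ^ 2) ≤ 0 :=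
      div_nonpos_of_nonneg_of_nonpos (sq_nonneg _) (le_of_lt hDneg)
    rw [abs_of_nonpos hT]
    have heq : -((a - b) ^ 2 / ((a - b) ^ 2 - n ^ 2))
        = (a - b) ^ 2 / (n ^ 2 - (a - b) ^ 2) := by
      rw [← div_neg, neg_sub]
    rw [heq, div_le_div_iff₀ (by linarith) (by positivity)]
    have key : ((a - b) ^ 2 * (2 * m ^ 2)) * (a + b) ^ 2
        ≤ ((P ^ 2 + Q ^ 2) * (n ^ 2 - (a - b) ^ 2)) * (a + b) ^ 2 := by
      have h1m : 2 * m ^ 2 * ((a - b) ^ 2 * (a + b) ^ 2)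
          = 2 * m ^ 2 * ((P + Q) ^ 2 * (P - Q) ^ 2) := by rw [h1]
      have h1s : (P ^ 2 + Q ^ 2) * ((a - b) ^ 2 * (a + b) ^ 2)
          = (P ^ 2 + Q ^ 2) * ((P + Q) ^ 2 * (P - Q) ^ 2) := by rw [h1]
      have e3 : (P + Q) ^ 2 ≤ 2 * (P ^ 2 + Q ^ 2) := by linarith [sq_nonneg (P - Q)]
      have c1 : 2 * m ^ 2 * ((P + Q) ^ 2 * (P - Q) ^ 2)
          ≤ 2 * m ^ 2 * ((P + Q) ^ 2 * n ^ 2) :=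
        mul_le_mul_of_nonneg_left e2 (by positivity)
      have c2 : 2 * m ^ 2 * n ^ 2 * (P + Q) ^ 2
          ≤ 2 * m ^ 2 * n ^ 2 * (2 * (P ^ 2 + Q ^ 2)) :=
        mul_le_mul_of_nonneg_left e3 (by positivity)
      have c3 : (P ^ 2 + Q ^ 2) * ((P + Q) ^ 2 * (P - Q) ^ 2)
          ≤ (P ^ 2 + Q ^ 2) * ((P + Q) ^ 2 * n ^ 2) :=
        mul_le_mul_of_nonneg_left (mul_le_mul_of_nonneg_left hPQ2 (sq_nonneg _))
          (by positivity)
      have c4 : (P ^ 2 + Q ^ 2) * n ^ 2 * ((P + Q) ^ 2 + 4 * m ^ 2)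
          ≤ (P ^ 2 + Q ^ 2) * n ^ 2 * (a + b) ^ 2 :=
        mul_le_mul_of_nonneg_left h2 (by positivity)
      linarith [h1m, h1s, c1, c2, c3, c4]
    exact le_of_mul_le_mul_right key hK
end

section
/- Along the straight line through a diagonal point (𝐩,𝐩) in direction (𝐧,-𝐧), with |𝐧| = 1 and m > 0, the limit as t → 0 of |𝐩₁-𝐩₂|²/(-(p₁-p₂)²) with 𝐩₁ = 𝐩 + t𝐧, 𝐩₂ = 𝐩 - t𝐧 equals (|𝐩|² + m²)/(|𝐩|² + m² - ⟨𝐧,𝐩⟩²); this limit attains its maximum value (|𝐩|²+m²)/m² when 𝐧 is parallel to 𝐩 and its minimum value 1 when 𝐧 ⊥ 𝐩. -/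
set_option maxHeartbeats 1600000


/-- Along the line through the diagonal point (𝐩,𝐩) in direction (𝐧,-𝐧), |𝐧|=1, m>0, the
  ratio |𝐩₁-𝐩₂|²/(-(p₁-p₂)²) tends, as t → 0, to L = (|𝐩|²+m²)/(|𝐩|²+m²-⟨𝐧,𝐩⟩²); this
  limit lies between 1 and (|𝐩|²+m²)/m², attaining the maximum when 𝐧 is parallel to 𝐩
  and the minimum 1 when 𝐧 ⊥ 𝐩. -/
theorem stmt_17 (m : ℝ) (hm : 0 < m) (p n : EuclideanSpace ℝ (Fin 3)) (hn : ‖n‖ = 1) :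
    Filter.Tendsto
      (fun t : ℝ =>
        ‖(p + t • n) - (p - t • n)‖ ^ 2 /
          (-((Real.sqrt (‖p + t • n‖ ^ 2 + m ^ 2)
                - Real.sqrt (‖p - t • n‖ ^ 2 + m ^ 2)) ^ 2
              - ‖(p + t • n) - (p - t • n)‖ ^ 2)))
      (nhdsWithin 0 {(0 : ℝ)}ᶜ)
      (nhds ((‖p‖ ^ 2 + m ^ 2) / (‖p‖ ^ 2 + m ^ 2 - (inner ℝ n p : ℝ) ^ 2)))
    ∧ 1 ≤ (‖p‖ ^ 2 + m ^ 2) / (‖p‖ ^ 2 + m ^ 2 - (inner ℝ n p : ℝ) ^ 2)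
    ∧ (‖p‖ ^ 2 + m ^ 2) / (‖p‖ ^ 2 + m ^ 2 - (inner ℝ n p : ℝ) ^ 2)
        ≤ (‖p‖ ^ 2 + m ^ 2) / m ^ 2
    ∧ ((inner ℝ n p : ℝ) ^ 2 = ‖p‖ ^ 2 →
        (‖p‖ ^ 2 + m ^ 2) / (‖p‖ ^ 2 + m ^ 2 - (inner ℝ n p : ℝ) ^ 2)
          = (‖p‖ ^ 2 + m ^ 2) / m ^ 2)
    ∧ ((inner ℝ n p : ℝ) = 0 →
        (‖p‖ ^ 2 + m ^ 2) / (‖p‖ ^ 2 + m ^ 2 - (inner ℝ n p : ℝ) ^ 2) = 1) := by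
  set c : ℝ := (inner ℝ n p : ℝ) with hc
  have habs : |c| ≤ ‖p‖ := by
    have h := abs_real_inner_le_norm n p
    rwa [hn, one_mul] at h
  have hcs : c ^ 2 ≤ ‖p‖ ^ 2 := by
    calc c ^ 2 = |c| ^ 2 := (sq_abs c).symm
    _ ≤ ‖p‖ ^ 2 := by nlinarith [abs_nonneg c, norm_nonneg p]
  have hm2 : (0 : ℝ) < m ^ 2 := by positivity
  have hden : 0 < ‖p‖ ^ 2 + m ^ 2 - c ^ 2 := by nlinarith
  have hs2 : (0 : ℝ) < ‖p‖ ^ 2 + m ^ 2 := by nlinarith [sq_nonneg ‖p‖]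
  refine ⟨?_, ?_, ?_, ?_, ?_⟩
  · -- the limit
    set S : ℝ → ℝ := fun t =>
      Real.sqrt (‖p + t • n‖ ^ 2 + m ^ 2) + Real.sqrt (‖p - t • n‖ ^ 2 + m ^ 2) with hS
    have hScont : Continuous S := by
      apply Continuous.add
      · exact Real.continuous_sqrt.comp (by fun_prop)
      · exact Real.continuous_sqrt.comp (by fun_prop)
    have hS0 : S 0 = 2 * Real.sqrt (‖p‖ ^ 2 + m ^ 2) := by
      simp [hS, two_mul]
    have hSsq0 : S 0 ^ 2 = 4 * (‖p‖ ^ 2 + m ^ 2) := by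
      rw [hS0, mul_pow, Real.sq_sqrt hs2.le]; ring
    have hD0 : S 0 ^ 2 - 4 * c ^ 2 = 4 * (‖p‖ ^ 2 + m ^ 2 - c ^ 2) := by
      rw [hSsq0]; ring
    have hD0pos : 0 < S 0 ^ 2 - 4 * c ^ 2 := by rw [hD0]; linarith
    set g : ℝ → ℝ := fun t => S t ^ 2 / (S t ^ 2 - 4 * c ^ 2) with hg
    have hgcont : ContinuousAt g 0 := by
      apply ContinuousAt.div
      · exact (hScont.pow 2).continuousAt
      · exact ((hScont.pow 2).sub continuous_const).continuousAt
      · exact hD0pos.ne'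
    have hg0 : g 0 = (‖p‖ ^ 2 + m ^ 2) / (‖p‖ ^ 2 + m ^ 2 - c ^ 2) := by
      simp only [hg, hD0, hSsq0]
      rw [show 4 * (‖p‖ ^ 2 + m ^ 2) - 4 * c ^ 2 = 4 * (‖p‖ ^ 2 + m ^ 2 - c ^ 2) by ring,
        mul_div_mul_left _ _ (by norm_num : (4 : ℝ) ≠ 0)]
    have hgt : Filter.Tendsto g (nhdsWithin 0 {(0 : ℝ)}ᶜ) (nhds ((‖p‖ ^ 2 + m ^ 2) / (‖p‖ ^ 2 + m ^ 2 - c ^ 2))) := by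
      rw [← hg0]
      exact hgcont.continuousWithinAt.tendsto
    apply Filter.Tendsto.congr' _ hgt
    have h1 : ∀ᶠ t in nhds (0 : ℝ), 0 < S t ^ 2 - 4 * c ^ 2 :=
      (((hScont.pow 2).sub continuous_const).continuousAt).eventually (eventually_gt_nhds hD0pos)
    filter_upwards [nhdsWithin_le_nhds h1, self_mem_nhdsWithin] with t hD ht
    have ht0 : t ≠ 0 := ht
    set SA := Real.sqrt (‖p + t • n‖ ^ 2 + m ^ 2) with hSA
    set SB := Real.sqrt (‖p - t • n‖ ^ 2 + m ^ 2) with hSB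
    have hStSA : S t = SA + SB := rfl
    rw [hStSA] at hD
    have hApos : (0 : ℝ) < ‖p + t • n‖ ^ 2 + m ^ 2 := by positivity
    have hBpos : (0 : ℝ) < ‖p - t • n‖ ^ 2 + m ^ 2 := by positivity
    have hSApos : 0 < SA := Real.sqrt_pos.mpr hApos
    have hSBpos : 0 < SB := Real.sqrt_pos.mpr hBpos
    have hin : (inner ℝ p n : ℝ) = c := by rw [hc, real_inner_comm]
    have hsub : (‖p + t • n‖ ^ 2 + m ^ 2) - (‖p - t • n‖ ^ 2 + m ^ 2) = 4 * t * c := by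
      rw [norm_add_sq_real, norm_sub_sq_real, real_inner_smul_right, hin]
      ring
    have hmul : (SA - SB) * (SA + SB) = 4 * t * c := by
      have h2 : (SA - SB) * (SA + SB) = SA ^ 2 - SB ^ 2 := by ring
      rw [h2, hSA, hSB, Real.sq_sqrt hApos.le, Real.sq_sqrt hBpos.le]
      exact hsub
    have hsq2 : (SA - SB) ^ 2 * (SA + SB) ^ 2 = 16 * t ^ 2 * c ^ 2 := by
      have h3 := congrArg (· ^ 2) hmul
      linear_combination h3
    have hnum : ‖(p + t • n) - (p - t • n)‖ ^ 2 = 4 * t ^ 2 := by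
      have hv : (p + t • n) - (p - t • n) = (2 * t) • n := by
        module
      rw [hv, norm_smul, hn, mul_one, Real.norm_eq_abs, sq_abs]
      ring
    have ht2 : 0 < t ^ 2 := by positivity
    have hSsum2 : 0 < (SA + SB) ^ 2 := by positivity
    have hkey : (4 * t ^ 2 - (SA - SB) ^ 2) * (SA + SB) ^ 2
        = 4 * t ^ 2 * ((SA + SB) ^ 2 - 4 * c ^ 2) := by
      linear_combination -hsq2
    have hd2pos : 0 < 4 * t ^ 2 - (SA - SB) ^ 2 := by
      nlinarith [mul_pos (mul_pos (by norm_num : (0:ℝ) < 4) ht2) hD, hkey, hSsum2]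
    show g t = ‖(p + t • n) - (p - t • n)‖ ^ 2 /
        (-((SA - SB) ^ 2 - ‖(p + t • n) - (p - t • n)‖ ^ 2))
    rw [hnum]
    have hgt2 : g t = (SA + SB) ^ 2 / ((SA + SB) ^ 2 - 4 * c ^ 2) := rfl
    rw [hgt2, neg_sub, div_eq_div_iff hD.ne' hd2pos.ne']
    linear_combination hkey
  · rw [one_le_div hden]; nlinarith [sq_nonneg c]
  · exact div_le_div_of_nonneg_left hs2.le hm2 (by nlinarith)
  · intro h; rw [h]; ring_nf
  · intro h; rw [h]; simp [div_self hs2.ne']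
end
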